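/- Let G be an ordered abelian group such that the extension G ⊆ div(G) is immediate with respect to the natural valuation and the value set of G is order-isomorphic to a subset of ω. Then G is dense in its divisible hull. -/

import Mathlib

/-- Let `G` be an ordered abelian group such that the extension `G ⊆ div(G)` is immediate
with respect to the natural valuation and the value set of `G` is order-isomorphic to a
subset of `ω`. Then `G` is dense in its divisible hull. Here the divisible hull is modelled
by a divisible ordered abelian group `D` together with an order-embedding `f : G →+ D` such
that every element of `D` has a positive multiple in the image of `f`; immediateness says
that every nonzero `a ∈ D` admits `b ∈ G` with `v(a - f b) > v(a)`, i.e. `a - f b`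
archimedean strictly smaller than `a`; the value-set condition is expressed by a rank
function `r : G → ℕ` reversing the archimedean comparison. -/
theorem stmt_18 {G D : Type*} [AddCommGroup G] [LinearOrder G] [IsOrderedAddMonoid G]
    [AddCommGroup D] [LinearOrder D] [IsOrderedAddMonoid D]
    (f : G →+ D) (hf : StrictMono f)
    (hdivD : ∀ (d : D) (n : ℕ), 0 < n → ∃ e : D, n • e = d)
    (hhull : ∀ d : D, ∃ (n : ℕ) (g : G), 0 < n ∧ n • d = f g)
    (himm : ∀ a : D, a ≠ 0 → ∃ b : G, ∀ n : ℕ, n • |a - f b| < |a|)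
    (hω : ∃ r : G → ℕ, ∀ g h : G, g ≠ 0 → h ≠ 0 →
      ((∀ n : ℕ, n • |h| < |g|) ↔ r g < r h)) :
    ∀ a b : D, a < b → ∃ g : G, a < f g ∧ f g < b := by
  obtain ⟨r, hr⟩ := hω
  -- `f` commutes with `abs`
  have habs : ∀ x : G, |f x| = f |x| := by
    intro x
    rw [abs_eq_max_neg, abs_eq_max_neg, ← map_neg f, hf.monotone.map_max]
  -- nonzero elements of `D` have nonzero positive multiples
  have hnz : ∀ (d : D) (n : ℕ), d ≠ 0 → 0 < n → n • d ≠ 0 := by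
    intro d n hd hn
    rcases hd.lt_or_gt with h | h
    · have : 0 < n • (-d) := nsmul_pos (by simpa using h) hn.ne'
      rw [smul_neg] at this
      intro h0; rw [h0] at this; simp at this
    · exact (nsmul_pos h hn.ne').ne'
  -- a representative of a nonzero element is nonzero
  have hrep_nz : ∀ (d : D) (n : ℕ) (g : G), d ≠ 0 → 0 < n → n • d = f g → g ≠ 0 := by
    intro d n g hd hn hng hg0
    subst hg0
    rw [map_zero] at hng
    exact hnz d n hd hn hng
  -- key approximation lemma
  have key : ∀ ε : D, 0 < ε → ∀ d : D, ∃ g : G, |d - f g| < ε := by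
    intro ε hε
    obtain ⟨m, e, hm, hme⟩ := hhull ε
    have he0 : e ≠ 0 := hrep_nz ε m e hε.ne' hm hme
    -- main induction on the rank budget
    have main : ∀ k : ℕ, ∀ d : D, d ≠ 0 →
        (∀ (n : ℕ) (g : G), 0 < n → n • d = f g → r e < r g + k) →
        ∃ g : G, |d - f g| < ε := by
      intro k
      induction k with
      | zero =>
        intro d hd hcond
        obtain ⟨n, g, hn, hng⟩ := hhull d
        have hg0 : g ≠ 0 := hrep_nz d n g hd hn hng
        have hre : r e < r g := by simpa using hcond n g hn hng
        have hsmall : ∀ j : ℕ, j • |g| < |e| := (hr e g he0 hg0).mpr hre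
        refine ⟨0, ?_⟩
        rw [map_zero, sub_zero]
        -- show |d| < ε
        by_contra hle
        push_neg at hle
        have h1 : (m * n) • |d| < m • ε := by
          have hfe : |f e| = m • ε := by
            rw [← hme]; exact abs_of_pos (nsmul_pos hε hm.ne')
          have := hf (hsmall m)
          rw [map_nsmul, ← habs g, ← hng, abs_nsmul, ← habs e, hfe] at this
          rw [mul_smul]; exact this
        have h2 : m • ε ≤ (m * n) • |d| := by
          calc m • ε ≤ m • |d| := nsmul_le_nsmul_right hle m
            _ ≤ (m * n) • |d| := nsmul_le_nsmul_left (abs_nonneg d)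
                (Nat.le_mul_of_pos_right m hn)
        exact absurd h1 (not_lt.mpr h2)
      | succ k ih =>
        intro d hd hcond
        obtain ⟨b, hb⟩ := himm d hd
        by_cases h0 : d - f b = 0
        · exact ⟨b, by rw [h0, abs_zero]; exact hε⟩
        · have hcond' : ∀ (n : ℕ) (g : G), 0 < n → n • (d - f b) = f g →
              r e < r g + k := by
            intro n g hn hng
            obtain ⟨n₀, g₀, hn₀, hng₀⟩ := hhull d
            have hg₀0 : g₀ ≠ 0 := hrep_nz d n₀ g₀ hd hn₀ hng₀
            have hg0 : g ≠ 0 := hrep_nz _ n g h0 hn hng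
            have hbase := hcond n₀ g₀ hn₀ hng₀
            -- show r g₀ < r g, i.e. g is archimedean-smaller than g₀
            have hlt : r g₀ < r g := by
              refine (hr g₀ g hg₀0 hg0).mp ?_
              intro j
              have hfin : f (j • |g|) < f |g₀| := by
                rw [map_nsmul, ← habs g, ← hng, abs_nsmul, ← mul_smul,
                  ← habs g₀, ← hng₀, abs_nsmul]
                calc (j * n) • |d - f b| < |d| := hb (j * n)
                  _ ≤ n₀ • |d| := by
                      have h1 : 1 • |d| ≤ n₀ • |d| :=
                        nsmul_le_nsmul_left (abs_nonneg d) hn₀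
                      simpa using h1
              exact hf.lt_iff_lt.mp hfin
            omega
          obtain ⟨g', hg'⟩ := ih (d - f b) h0 hcond'
          refine ⟨b + g', ?_⟩
          rw [map_add, ← sub_sub]
          exact hg'
    intro d
    by_cases hd : d = 0
    · exact ⟨0, by simp [hd, hε]⟩
    · obtain ⟨n, g, hn, hng⟩ := hhull d
      exact main (r e + 1) d hd (fun n' g' _ _ => by omega)
  -- density
  intro a b hab
  obtain ⟨ε, hε2⟩ := hdivD (b - a) 2 (by norm_num)
  have hε : 0 < ε := by
    by_contra h
    push_neg at h
    have h2 : 2 • ε ≤ 2 • (0 : D) := nsmul_le_nsmul_right h 2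
    rw [hε2, smul_zero] at h2
    exact absurd (sub_pos.mpr hab) (not_lt.mpr h2)
  obtain ⟨g, hg⟩ := key ε hε (a + ε)
  have h2 : ε + ε = b - a := by rw [← two_nsmul, hε2]
  obtain ⟨hg1, hg2⟩ := abs_lt.mp hg
  have hlt1 : a < f g := by
    rw [sub_lt_iff_lt_add, add_comm ε (f g)] at hg2
    exact lt_of_add_lt_add_right hg2
  have hlt2 : f g < b := by
    rw [neg_lt, neg_sub] at hg1
    calc f g = (f g - (a + ε)) + (a + ε) := by abel
      _ < ε + (a + ε) := add_lt_add_left hg1 _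
      _ = a + (ε + ε) := by abel
      _ = b := by rw [h2]; abel
  exact ⟨g, hlt1, hlt2⟩
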